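/- Let H be a complex Hilbert space, V ⊆ B(H) a linear subspace, and e ∈ V with ‖e‖ = 1. Suppose that for every n and all x, y ∈ M_n(V) one has ‖x + y‖ ≤ ‖[x I_n⊗e]‖ · ‖[I_n⊗e ; y]‖. Then for every n and every x ∈ M_n(V) with ‖x‖ = 1, one has ‖[I_n⊗e x]‖ = ‖[I_n⊗e ; x]‖ = √2. -/

import Mathlib

noncomputable section

open scoped BigOperators

variable {H : Type} [NormedAddCommGroup H] [InnerProductSpace ℂ H] [CompleteSpace H]

/-- A matrix over `B(H)` viewed as a bounded operator between the `ℓ²`-direct sums `H^κ → H^ι`. -/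
noncomputable def opMatCLM {ι κ : Type} [Fintype ι] [Fintype κ]
    (A : Matrix ι κ (H →L[ℂ] H)) :
    PiLp 2 (fun _ : κ => H) →L[ℂ] PiLp 2 (fun _ : ι => H) :=
  ((PiLp.continuousLinearEquiv 2 ℂ (fun _ : ι => H)).symm.toContinuousLinearMap) ∘L
    (ContinuousLinearMap.pi fun i => ∑ j, (A i j).comp (ContinuousLinearMap.proj j)) ∘L
    ((PiLp.continuousLinearEquiv 2 ℂ (fun _ : κ => H)).toContinuousLinearMap)

/-- The operator norm of a matrix over `B(H)`, viewed as an operator `H^κ → H^ι`. -/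
noncomputable def opMatNorm {ι κ : Type} [Fintype ι] [Fintype κ]
    (A : Matrix ι κ (H →L[ℂ] H)) : ℝ := ‖opMatCLM A‖

/-- The norm of a matrix over a subspace `V ⊆ B(H)`, computed in `B(H)`. -/
noncomputable def subMatNorm {V : Submodule ℂ (H →L[ℂ] H)} {ι κ : Type} [Fintype ι] [Fintype κ]
    (A : Matrix ι κ ↥V) : ℝ := opMatNorm (A.map (fun v => (v : H →L[ℂ] H)))

set_option linter.unusedSectionVars false

lemma opMatCLM_apply {ι κ : Type} [Fintype ι] [Fintype κ]
    (A : Matrix ι κ (H →L[ℂ] H)) (u : PiLp 2 (fun _ : κ => H)) (i : ι) :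
    opMatCLM A u i = ∑ j, A i j (u j) := by
  simp [opMatCLM, ContinuousLinearMap.sum_apply]

lemma opMatCLM_add {ι κ : Type} [Fintype ι] [Fintype κ]
    (A B : Matrix ι κ (H →L[ℂ] H)) :
    opMatCLM (A + B) = opMatCLM A + opMatCLM B := by
  ext u i
  simp [opMatCLM_apply, Matrix.add_apply, Finset.sum_add_distrib]

lemma opMatCLM_diag_le {n : ℕ} (e : H →L[ℂ] H) :
    ‖opMatCLM (Matrix.diagonal fun _ : Fin n => e)‖ ≤ ‖e‖ := by
  refine ContinuousLinearMap.opNorm_le_bound _ (norm_nonneg e) fun u => ?_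
  have happ : ∀ i, opMatCLM (Matrix.diagonal fun _ : Fin n => e) u i = e (u i) := by
    intro i
    rw [opMatCLM_apply]
    rw [Finset.sum_eq_single i]
    · simp
    · intro j _ hj
      simp [Matrix.diagonal_apply, Ne.symm hj]
    · simp
  rw [PiLp.norm_eq_of_L2, PiLp.norm_eq_of_L2]
  rw [← Real.sqrt_sq (norm_nonneg e), ← Real.sqrt_mul (sq_nonneg _)]
  apply Real.sqrt_le_sqrt
  rw [Finset.mul_sum]
  apply Finset.sum_le_sum
  intro i _
  rw [happ i]
  have := e.le_opNorm (u i)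
  nlinarith [norm_nonneg (u i), norm_nonneg (e (u i))]

lemma piLp_norm_sq {ι : Type} [Fintype ι] (u : PiLp 2 (fun _ : ι => H)) :
    ‖u‖ ^ 2 = ∑ i, ‖u i‖ ^ 2 := by
  rw [PiLp.norm_eq_of_L2, Real.sq_sqrt]
  positivity

lemma opMatCLM_fromRows_le {n : ℕ} (A B : Matrix (Fin n) (Fin n) (H →L[ℂ] H)) :
    ‖opMatCLM (Matrix.fromRows A B)‖ ≤
      Real.sqrt (‖opMatCLM A‖ ^ 2 + ‖opMatCLM B‖ ^ 2) := by
  refine ContinuousLinearMap.opNorm_le_bound _ (Real.sqrt_nonneg _) fun u => ?_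
  have h1 : ‖opMatCLM (Matrix.fromRows A B) u‖ ^ 2
      = ‖opMatCLM A u‖ ^ 2 + ‖opMatCLM B u‖ ^ 2 := by
    rw [piLp_norm_sq, piLp_norm_sq, piLp_norm_sq, Fintype.sum_sum_type]
    simp [opMatCLM_apply]
  have h2 : ‖opMatCLM (Matrix.fromRows A B) u‖ ^ 2
      ≤ (‖opMatCLM A‖ ^ 2 + ‖opMatCLM B‖ ^ 2) * ‖u‖ ^ 2 := by
    rw [h1]
    have ha := (opMatCLM A).le_opNorm u
    have hb := (opMatCLM B).le_opNorm u
    nlinarith [norm_nonneg (opMatCLM A u), norm_nonneg (opMatCLM B u),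
      norm_nonneg u, (opMatCLM A).opNorm_nonneg, (opMatCLM B).opNorm_nonneg]
  calc ‖opMatCLM (Matrix.fromRows A B) u‖
      = Real.sqrt (‖opMatCLM (Matrix.fromRows A B) u‖ ^ 2) := by
        rw [Real.sqrt_sq (norm_nonneg _)]
    _ ≤ Real.sqrt ((‖opMatCLM A‖ ^ 2 + ‖opMatCLM B‖ ^ 2) * ‖u‖ ^ 2) := Real.sqrt_le_sqrt h2
    _ = _ := by
        rw [Real.sqrt_mul (by positivity), Real.sqrt_sq (norm_nonneg u)]

lemma opMatCLM_fromColumns_le {n : ℕ} (A B : Matrix (Fin n) (Fin n) (H →L[ℂ] H)) :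
    ‖opMatCLM (Matrix.fromCols A B)‖ ≤
      Real.sqrt (‖opMatCLM A‖ ^ 2 + ‖opMatCLM B‖ ^ 2) := by
  refine ContinuousLinearMap.opNorm_le_bound _ (Real.sqrt_nonneg _) fun u => ?_
  set u₁ : PiLp 2 (fun _ : Fin n => H) := WithLp.toLp 2 fun j => u (Sum.inl j) with hu₁
  set u₂ : PiLp 2 (fun _ : Fin n => H) := WithLp.toLp 2 fun j => u (Sum.inr j) with hu₂
  have hsplit : opMatCLM (Matrix.fromCols A B) u = opMatCLM A u₁ + opMatCLM B u₂ := by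
    ext i
    show opMatCLM (Matrix.fromCols A B) u i = opMatCLM A u₁ i + opMatCLM B u₂ i
    simp [opMatCLM_apply, Fintype.sum_sum_type, hu₁, hu₂]
  have hu : ‖u‖ ^ 2 = ‖u₁‖ ^ 2 + ‖u₂‖ ^ 2 := by
    rw [piLp_norm_sq, piLp_norm_sq, piLp_norm_sq, Fintype.sum_sum_type]
  have key : ‖opMatCLM A‖ * ‖u₁‖ + ‖opMatCLM B‖ * ‖u₂‖
      ≤ Real.sqrt (‖opMatCLM A‖ ^ 2 + ‖opMatCLM B‖ ^ 2) * ‖u‖ := by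
    have h1 : Real.sqrt (‖opMatCLM A‖ ^ 2 + ‖opMatCLM B‖ ^ 2) ^ 2
        = ‖opMatCLM A‖ ^ 2 + ‖opMatCLM B‖ ^ 2 := Real.sq_sqrt (by positivity)
    have hL : (0:ℝ) ≤ ‖opMatCLM A‖ * ‖u₁‖ + ‖opMatCLM B‖ * ‖u₂‖ := by positivity
    have hR : (0:ℝ) ≤ Real.sqrt (‖opMatCLM A‖ ^ 2 + ‖opMatCLM B‖ ^ 2) * ‖u‖ := by positivity
    have hsq : (‖opMatCLM A‖ * ‖u₁‖ + ‖opMatCLM B‖ * ‖u₂‖) ^ 2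
        ≤ (Real.sqrt (‖opMatCLM A‖ ^ 2 + ‖opMatCLM B‖ ^ 2) * ‖u‖) ^ 2 := by
      rw [mul_pow, h1, hu]
      nlinarith [sq_nonneg (‖opMatCLM A‖ * ‖u₂‖ - ‖opMatCLM B‖ * ‖u₁‖)]
    calc ‖opMatCLM A‖ * ‖u₁‖ + ‖opMatCLM B‖ * ‖u₂‖
        = Real.sqrt ((‖opMatCLM A‖ * ‖u₁‖ + ‖opMatCLM B‖ * ‖u₂‖) ^ 2) :=
          (Real.sqrt_sq hL).symm
      _ ≤ Real.sqrt ((Real.sqrt (‖opMatCLM A‖ ^ 2 + ‖opMatCLM B‖ ^ 2) * ‖u‖) ^ 2) :=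
          Real.sqrt_le_sqrt hsq
      _ = _ := Real.sqrt_sq hR
  calc ‖opMatCLM (Matrix.fromCols A B) u‖
      ≤ ‖opMatCLM A u₁‖ + ‖opMatCLM B u₂‖ := by rw [hsplit]; exact norm_add_le _ _
    _ ≤ ‖opMatCLM A‖ * ‖u₁‖ + ‖opMatCLM B‖ * ‖u₂‖ :=
        add_le_add ((opMatCLM A).le_opNorm u₁) ((opMatCLM B).le_opNorm u₂)
    _ ≤ _ := key

lemma opMatCLM_submatrix {ι κ κ' : Type} [Fintype ι] [Fintype κ] [Fintype κ']
    (A : Matrix ι κ (H →L[ℂ] H)) (σ : κ' ≃ κ) :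
    opMatCLM (A.submatrix id σ) = (opMatCLM A).comp
      (LinearIsometryEquiv.piLpCongrLeft 2 ℂ H σ).toLinearIsometry.toContinuousLinearMap := by
  ext u i
  show opMatCLM (A.submatrix id σ) u i
    = opMatCLM A (LinearIsometryEquiv.piLpCongrLeft 2 ℂ H σ u) i
  rw [opMatCLM_apply, opMatCLM_apply]
  refine Fintype.sum_equiv σ _ _ fun j => ?_
  rw [LinearIsometryEquiv.piLpCongrLeft_apply]
  simp [Equiv.piCongrLeft', Matrix.submatrix_apply]

lemma opMatCLM_swap {n : ℕ} (A B : Matrix (Fin n) (Fin n) (H →L[ℂ] H)) :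
    ‖opMatCLM (Matrix.fromCols A B)‖ = ‖opMatCLM (Matrix.fromCols B A)‖ := by
  have h : Matrix.fromCols A B
      = (Matrix.fromCols B A).submatrix id (Equiv.sumComm (Fin n) (Fin n)) := by
    ext i j
    cases j <;> simp [Matrix.submatrix_apply]
  rw [h, opMatCLM_submatrix]
  exact (opMatCLM (Matrix.fromCols B A)).opNorm_comp_linearIsometryEquiv
    (LinearIsometryEquiv.piLpCongrLeft 2 ℂ H (Equiv.sumComm (Fin n) (Fin n)))

lemma fromColumns_map {ι κ κ' α β : Type} (a : Matrix ι κ α) (b : Matrix ι κ' α) (f : α → β) :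
    (Matrix.fromCols a b).map f = Matrix.fromCols (a.map f) (b.map f) := by
  ext i j
  cases j <;> simp [Matrix.map_apply]

lemma fromRows_map {ι ι' κ α β : Type} (a : Matrix ι κ α) (b : Matrix ι' κ α) (f : α → β) :
    (Matrix.fromRows a b).map f = Matrix.fromRows (a.map f) (b.map f) := by
  ext i j
  cases i <;> simp [Matrix.map_apply]


set_option synthInstance.maxHeartbeats 400000 in
lemma clm_norm_add_self {ι κ : Type} [Fintype ι] [Fintype κ]
    (T : PiLp 2 (fun _ : κ => H) →L[ℂ] PiLp 2 (fun _ : ι => H)) : ‖T + T‖ = 2 * ‖T‖ := by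
  apply le_antisymm
  · refine ContinuousLinearMap.opNorm_le_bound _ (by positivity) fun u => ?_
    rw [ContinuousLinearMap.add_apply]
    calc ‖T u + T u‖ ≤ ‖T u‖ + ‖T u‖ := norm_add_le _ _
      _ ≤ ‖T‖ * ‖u‖ + ‖T‖ * ‖u‖ := add_le_add (T.le_opNorm u) (T.le_opNorm u)
      _ = 2 * ‖T‖ * ‖u‖ := by ring
  · have h : ‖T‖ ≤ ‖T + T‖ / 2 := by
      refine ContinuousLinearMap.opNorm_le_bound _ (by positivity) fun u => ?_
      have h1 : ‖T u + T u‖ = 2 * ‖T u‖ := by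
        rw [← two_smul ℝ (T u), norm_smul]; norm_num
      have h2 := (T + T).le_opNorm u
      rw [ContinuousLinearMap.add_apply, h1] at h2
      linarith
    linarith

/-- Let `V ⊆ B(H)` be a linear subspace and `e ∈ V` with `‖e‖ = 1`.  If for every `n` and all
`x, y ∈ Mₙ(V)` one has `‖x + y‖ ≤ ‖[x  Iₙ⊗e]‖ ‖[Iₙ⊗e ; y]‖`, then for every `x ∈ Mₙ(V)` with
`‖x‖ = 1` one has `‖[Iₙ⊗e  x]‖ = ‖[Iₙ⊗e ; x]‖ = √2`. -/
theorem row_column_norm_sqrt_two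
    (V : Submodule ℂ (H →L[ℂ] H)) (e : ↥V) (he : ‖(e : H →L[ℂ] H)‖ = 1)
    (hyp : ∀ (n : ℕ) (x y : Matrix (Fin n) (Fin n) ↥V),
      subMatNorm (x + y) ≤
        subMatNorm (Matrix.fromCols x (Matrix.diagonal fun _ : Fin n => e)) *
          subMatNorm (Matrix.fromRows (Matrix.diagonal fun _ : Fin n => e) y)) :
    ∀ (n : ℕ) (x : Matrix (Fin n) (Fin n) ↥V), subMatNorm x = 1 →
      subMatNorm (Matrix.fromCols (Matrix.diagonal fun _ : Fin n => e) x) = Real.sqrt 2 ∧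
      subMatNorm (Matrix.fromRows (Matrix.diagonal fun _ : Fin n => e) x) = Real.sqrt 2 := by
  intro n x hx
  have hdmap : (Matrix.diagonal fun _ : Fin n => e).map (fun v : ↥V => (v : H →L[ℂ] H))
      = Matrix.diagonal (fun _ : Fin n => (e : H →L[ℂ] H)) := by
    rw [Matrix.diagonal_map (by simp)]
  have hxn : ‖opMatCLM (x.map (fun v : ↥V => (v : H →L[ℂ] H)))‖ = 1 := hx
  have hEn : ‖opMatCLM ((Matrix.diagonal fun _ : Fin n => e).map
      (fun v : ↥V => (v : H →L[ℂ] H)))‖ ≤ 1 := by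
    rw [hdmap, ← he]
    exact opMatCLM_diag_le _
  -- upper bounds
  have hrow : subMatNorm (Matrix.fromCols (Matrix.diagonal fun _ : Fin n => e) x)
      ≤ Real.sqrt 2 := by
    unfold subMatNorm opMatNorm
    rw [fromColumns_map]
    refine le_trans (opMatCLM_fromColumns_le _ _) (Real.sqrt_le_sqrt ?_)
    rw [hxn]
    nlinarith [ContinuousLinearMap.opNorm_nonneg (opMatCLM
      ((Matrix.diagonal fun _ : Fin n => e).map (fun v : ↥V => (v : H →L[ℂ] H))))]
  have hcol : subMatNorm (Matrix.fromRows (Matrix.diagonal fun _ : Fin n => e) x)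
      ≤ Real.sqrt 2 := by
    unfold subMatNorm opMatNorm
    rw [fromRows_map]
    refine le_trans (opMatCLM_fromRows_le _ _) (Real.sqrt_le_sqrt ?_)
    rw [hxn]
    nlinarith [ContinuousLinearMap.opNorm_nonneg (opMatCLM
      ((Matrix.diagonal fun _ : Fin n => e).map (fun v : ↥V => (v : H →L[ℂ] H))))]
  -- lower bound
  have hdouble : subMatNorm (x + x) = 2 := by
    have hmap : (x + x).map (fun v : ↥V => (v : H →L[ℂ] H))
        = x.map (fun v : ↥V => (v : H →L[ℂ] H)) + x.map (fun v : ↥V => (v : H →L[ℂ] H)) := by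
      ext i j
      simp [Matrix.map_apply, Matrix.add_apply]
    unfold subMatNorm opMatNorm
    rw [hmap, opMatCLM_add, clm_norm_add_self, hxn]
    norm_num
  have hswap : subMatNorm (Matrix.fromCols x (Matrix.diagonal fun _ : Fin n => e))
      = subMatNorm (Matrix.fromCols (Matrix.diagonal fun _ : Fin n => e) x) := by
    unfold subMatNorm opMatNorm
    rw [fromColumns_map, fromColumns_map]
    exact opMatCLM_swap _ _
  have h2 : 2 ≤ subMatNorm (Matrix.fromCols (Matrix.diagonal fun _ : Fin n => e) x)
      * subMatNorm (Matrix.fromRows (Matrix.diagonal fun _ : Fin n => e) x) := by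
    have := hyp n x x
    rw [hdouble, hswap] at this
    exact this
  have ha0 : 0 ≤ subMatNorm (Matrix.fromCols (Matrix.diagonal fun _ : Fin n => e) x) := by
    unfold subMatNorm opMatNorm
    exact ContinuousLinearMap.opNorm_nonneg _
  have hb0 : 0 ≤ subMatNorm (Matrix.fromRows (Matrix.diagonal fun _ : Fin n => e) x) := by
    unfold subMatNorm opMatNorm
    exact ContinuousLinearMap.opNorm_nonneg _
  set a := subMatNorm (Matrix.fromCols (Matrix.diagonal fun _ : Fin n => e) x)
  set b := subMatNorm (Matrix.fromRows (Matrix.diagonal fun _ : Fin n => e) x)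
  have hs : Real.sqrt 2 * Real.sqrt 2 = 2 := Real.mul_self_sqrt (by norm_num)
  have hspos : 0 < Real.sqrt 2 := Real.sqrt_pos.mpr (by norm_num)
  constructor
  · nlinarith
  · nlinarith
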